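/- arXiv:2003.03371 — 6 statements merged into one kernel-verified Lean document; each statement's English description precedes it below -/
import Mathlib

section
/- Let R be an alternative ring with idempotent e1 and let e2 denote the complementary Peirce projection (e2(a) = a - e1·a on the left, a - a·e1 on the right). Then for any a in R and i,j in {1,2}, (e_i·a)·e_j = e_i·(a·e_j). -/
/-- Left action of the Peirce "idempotents" `e₁` and `e₂`
(`e₂` acts by `a ↦ a - e₁ a` on the left). -/
def peirceL {R : Type*} [NonUnitalNonAssocRing R] (e1 : R) : Fin 2 → R → R :=
  fun i a => if i = 0 then e1 * a else a - e1 * a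

/-- Right action of the Peirce "idempotents" (`e₂` acts by `a ↦ a - a e₁`). -/
def peirceR {R : Type*} [NonUnitalNonAssocRing R] (e1 : R) : Fin 2 → R → R :=
  fun j a => if j = 0 then a * e1 else a - a * e1

/-- In an alternative ring with idempotent `e₁`, `(eᵢ a) eⱼ = eᵢ (a eⱼ)`. -/
theorem peirce_assoc (R : Type*) [NonUnitalNonAssocRing R]
    (alt_left : ∀ x y : R, (x * x) * y = x * (x * y))
    (alt_right : ∀ x y : R, (y * x) * x = y * (x * x))
    (e1 : R) (he : e1 * e1 = e1) :
    ∀ (i j : Fin 2) (a : R), peirceR e1 j (peirceL e1 i a) = peirceL e1 i (peirceR e1 j a) := by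
  have flex : ∀ a : R, (e1 * a) * e1 = e1 * (a * e1) := by
    intro a
    have h := alt_left (a + e1) e1
    simp only [add_mul, mul_add, alt_left a e1, alt_right e1 a, he] at h
    linear_combination (norm := abel) h
  intro i j a
  fin_cases i <;> fin_cases j <;>
    simp (config := { decide := true }) only [peirceL, peirceR, mul_sub, sub_mul, flex a,
      ite_true, ite_false] <;> abel
end

section
/- Let R be an alternative ring with a nontrivial idempotent e1 and Peirce decomposition. Then xy = -yx for all x, y in Rij with i ≠ j. -/
/-- The Peirce component `e R f = {x | e x = x ∧ x f = x}`. -/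
def peirceSet {R : Type*} [NonAssocRing R] (e f : R) : Set R :=
  {x | e * x = x ∧ x * f = x}

private lemma aux_projR {R : Type*} [NonAssocRing R]
    (alt_right : ∀ x y : R, (y * x) * x = y * (x * x))
    (e x y : R) (he : e * e = e) (hxe : x * e = 0) (hye : y * e = 0)
    (hey : e * y = y) : (x * y) * e = x * y := by
  have exp : (e + y) * (e + y) = e + y + y * y := by
    rw [add_mul, mul_add, mul_add, he, hey, hye, zero_add]
  have hxey : x * (e + y) = x * y := by rw [mul_add, hxe, zero_add]
  have h := alt_right (e + y) x
  rw [exp, hxey] at h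
  have hrhs : x * (e + y + y * y) = x * y + x * (y * y) := by
    rw [mul_add, hxey]
  rw [hrhs, mul_add] at h
  -- h : (x*y)*e + (x*y)*y = x*y + x*(y*y)
  rw [alt_right y x] at h
  exact add_right_cancel h

private lemma aux_anticomm {R : Type*} [NonAssocRing R]
    (alt_left : ∀ x y : R, (x * x) * y = x * (x * y))
    (alt_right : ∀ x y : R, (y * x) * x = y * (x * x))
    (e x y : R) (he : e * e = e) (hxe : x * e = 0) (hye : y * e = 0)
    (hex : e * x = x) (hey : e * y = y) : x * y = -(y * x) := by
  have hxy : (x * y) * e = x * y := aux_projR alt_right e x y he hxe hye hey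
  have hyx : (y * x) * e = y * x := aux_projR alt_right e y x he hye hxe hex
  have hx2 : (x * x) * e = 0 := by rw [alt_left, hxe, mul_zero]
  have hy2 : (y * y) * e = 0 := by rw [alt_left, hye, mul_zero]
  have hexp : (x + y) * (x + y) = x * x + x * y + (y * x + y * y) := by
    rw [add_mul, mul_add, mul_add]
  have hLHS : ((x + y) * (x + y)) * e
      = (x * x) * e + (x * y) * e + (y * x) * e + (y * y) * e := by
    rw [hexp, add_mul, add_mul, add_mul]; abel
  have hRHS : (x + y) * ((x + y) * e) = 0 := by
    rw [show (x + y) * e = 0 by rw [add_mul, hxe, hye, add_zero], mul_zero]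
  have hsum : x * y + y * x = 0 := by
    have h2 : (x * x) * e + (x * y) * e + (y * x) * e + (y * y) * e = 0 := by
      rw [← hLHS, alt_left, hRHS]
    rw [hx2, hy2, hxy, hyx, zero_add, add_zero] at h2
    exact h2
  exact eq_neg_of_add_eq_zero_left hsum

/-- In an alternative ring with a nontrivial idempotent, `xy = -yx` for `x, y ∈ Rᵢⱼ`, `i ≠ j`. -/
theorem peirce_anticomm (R : Type*) [NonAssocRing R]
    (alt_left : ∀ x y : R, (x * x) * y = x * (x * y))
    (alt_right : ∀ x y : R, (y * x) * x = y * (x * x))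
    (e1 : R) (he : e1 * e1 = e1) (he0 : e1 ≠ 0) (he1 : e1 ≠ 1)
    (e : Fin 2 → R) (h1 : e 0 = e1) (h2 : e 1 = 1 - e1) :
    ∀ (i j : Fin 2), i ≠ j → ∀ x ∈ peirceSet (e i) (e j), ∀ y ∈ peirceSet (e i) (e j),
      x * y = -(y * x) := by
  intro i j hij x hx y hy
  obtain ⟨hex, hxf⟩ := hx
  obtain ⟨hey, hyf⟩ := hy
  have hsum : e i + e j = 1 := by
    rcases (show i = 0 ∨ i = 1 by omega) with rfl | rfl <;>
      rcases (show j = 0 ∨ j = 1 by omega) with rfl | rfl <;>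
        first
          | exact absurd rfl hij
          | (rw [h1, h2]; abel)
          | (rw [h1, h2]; abel)
  have hidem : e i * e i = e i := by
    rcases (show i = 0 ∨ i = 1 by omega) with rfl | rfl
    · rw [h1]; exact he
    · rw [h2, mul_sub, sub_mul, sub_mul, he, mul_one, one_mul, mul_one]; abel
  have hxe : x * e i = 0 := by
    have h : x * e i + x = 0 + x := by
      rw [zero_add]
      calc x * e i + x = x * e i + x * e j := by rw [hxf]
        _ = x * (e i + e j) := (mul_add x _ _).symm
        _ = x := by rw [hsum, mul_one]
    exact add_right_cancel h
  have hye : y * e i = 0 := by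
    have h : y * e i + y = 0 + y := by
      rw [zero_add]
      calc y * e i + y = y * e i + y * e j := by rw [hyf]
        _ = y * (e i + e j) := (mul_add y _ _).symm
        _ = y := by rw [hsum, mul_one]
    exact add_right_cancel h
  exact aux_anticomm alt_left alt_right (e i) x y hidem hxe hye hex hey
end

section
/- Let R and R' be 2-torsion free alternative rings that are ℚ-algebras, and φ: R → R' a surjective Lie multiplicative map that preserves idempotents. Then φ(λr) = λφ(r) for every λ ∈ ℚ and r ∈ R. In particular φ(0) = 0 and φ(-r) = -φ(r). -/
private lemma nsmulMulAux {A : Type*} [NonUnitalNonAssocRing A] (n : ℕ) (x y : A) :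
    (n • x) * y = n • (x * y) := by
  induction n with
  | zero => simp
  | succ k ih => rw [succ_nsmul, succ_nsmul, add_mul, ih]

private lemma mulNsmulAux {A : Type*} [NonUnitalNonAssocRing A] (n : ℕ) (x y : A) :
    x * (n • y) = n • (x * y) := by
  induction n with
  | zero => simp
  | succ k ih => rw [succ_nsmul, succ_nsmul, mul_add, ih]

private lemma zsmulMulAux {A : Type*} [NonUnitalNonAssocRing A] (n : ℤ) (x y : A) :
    (n • x) * y = n • (x * y) := by
  rcases Int.eq_nat_or_neg n with ⟨m, rfl | rfl⟩
  · rw [natCast_zsmul, natCast_zsmul, nsmulMulAux]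
  · rw [neg_zsmul, neg_zsmul, natCast_zsmul, natCast_zsmul, neg_mul, nsmulMulAux]

private lemma mulZsmulAux {A : Type*} [NonUnitalNonAssocRing A] (n : ℤ) (x y : A) :
    x * (n • y) = n • (x * y) := by
  rcases Int.eq_nat_or_neg n with ⟨m, rfl | rfl⟩
  · rw [natCast_zsmul, natCast_zsmul, mulNsmulAux]
  · rw [neg_zsmul, neg_zsmul, natCast_zsmul, natCast_zsmul, mul_neg, mulNsmulAux]

private lemma ratSmulCancelAux {A : Type*} [NonUnitalNonAssocRing A] [Module ℚ A]
    (q : ℚ) (hq : q ≠ 0) {x y : A} (h : q • x = q • y) : x = y := by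
  have := congrArg (fun z => q⁻¹ • z) h
  simpa [smul_smul, inv_mul_cancel₀ hq] using this

private lemma denMulSelfAux (q : ℚ) : (q.den : ℚ) * q = (q.num : ℚ) := by
  have hden : ((q.den : ℚ)) ≠ 0 := by exact_mod_cast q.den_ne_zero
  have hnum := (div_eq_iff hden).mp (Rat.num_div_den q)
  rw [mul_comm, ← hnum]

private lemma ratSmulMulAux {A : Type*} [NonUnitalNonAssocRing A] [Module ℚ A]
    (q : ℚ) (x y : A) : (q • x) * y = q • (x * y) := by
  have hden : ((q.den : ℚ)) ≠ 0 := by exact_mod_cast q.den_ne_zero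
  apply ratSmulCancelAux (q.den : ℚ) hden
  calc (q.den : ℚ) • ((q • x) * y)
      = ((q.den : ℚ) • (q • x)) * y := by
        rw [Nat.cast_smul_eq_nsmul, Nat.cast_smul_eq_nsmul, nsmulMulAux]
    _ = ((q.num : ℚ) • x) * y := by rw [smul_smul, denMulSelfAux]
    _ = (q.num : ℚ) • (x * y) := by
        rw [Int.cast_smul_eq_zsmul, Int.cast_smul_eq_zsmul, zsmulMulAux]
    _ = (q.den : ℚ) • (q • (x * y)) := by rw [smul_smul, denMulSelfAux]

private lemma mulRatSmulAux {A : Type*} [NonUnitalNonAssocRing A] [Module ℚ A]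
    (q : ℚ) (x y : A) : x * (q • y) = q • (x * y) := by
  have hden : ((q.den : ℚ)) ≠ 0 := by exact_mod_cast q.den_ne_zero
  apply ratSmulCancelAux (q.den : ℚ) hden
  calc (q.den : ℚ) • (x * (q • y))
      = x * ((q.den : ℚ) • (q • y)) := by
        rw [Nat.cast_smul_eq_nsmul, Nat.cast_smul_eq_nsmul, mulNsmulAux]
    _ = x * ((q.num : ℚ) • y) := by rw [smul_smul, denMulSelfAux]
    _ = (q.num : ℚ) • (x * y) := by
        rw [Int.cast_smul_eq_zsmul, Int.cast_smul_eq_zsmul, mulZsmulAux]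
    _ = (q.den : ℚ) • (q • (x * y)) := by rw [smul_smul, denMulSelfAux]

/-- A surjective Lie multiplicative idempotent-preserving map between
2-torsion free alternative ℚ-algebras is ℚ-homogeneous; in particular it
kills `0` and commutes with negation. -/
theorem lie_map_rat_homogeneous (R R' : Type*) [NonUnitalNonAssocRing R] [NonUnitalNonAssocRing R']
    [Module ℚ R] [Module ℚ R']
    (altR_left : ∀ x y : R, (x * x) * y = x * (x * y))
    (altR_right : ∀ x y : R, (y * x) * x = y * (x * x))
    (altR'_left : ∀ x y : R', (x * x) * y = x * (x * y))
    (altR'_right : ∀ x y : R', (y * x) * x = y * (x * x))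
    (tf2R : ∀ x : R, (2 : ℕ) • x = 0 → x = 0)
    (tf2R' : ∀ x : R', (2 : ℕ) • x = 0 → x = 0)
    (φ : R → R') (hsurj : Function.Surjective φ)
    (hlie : ∀ x y : R, φ (x * y - y * x) = φ x * φ y - φ y * φ x)
    (hidem : ∀ (e f : R) (l : ℚ),
      IsIdempotentElem (e - l • f) ↔ IsIdempotentElem (φ e - l • φ f)) :
    (∀ (l : ℚ) (r : R), φ (l • r) = l • φ r) ∧ φ 0 = 0 ∧ ∀ r : R, φ (-r) = -φ r := by
  have h0 : φ 0 = 0 := by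
    have := hlie 0 0
    simpa using this
  have key : ∀ (l : ℚ), l ≠ 0 → l ≠ -1 → ∀ r : R, φ (l • r) = l • φ r := by
    intro l hl0 hl1 r
    have h1 : IsIdempotentElem (φ (l • r) - l • φ r) := by
      rw [← hidem]
      simp [IsIdempotentElem]
    have h2 : IsIdempotentElem (φ r - l⁻¹ • φ (l • r)) := by
      rw [← hidem]
      rw [smul_smul, inv_mul_cancel₀ hl0, one_smul, sub_self]
      simp [IsIdempotentElem]
    set p := φ (l • r) - l • φ r with hp
    have hq : φ r - l⁻¹ • φ (l • r) = (-l⁻¹) • p := by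
      rw [hp, smul_sub, smul_smul]
      have hml : -l⁻¹ * l = -1 := by field_simp
      rw [hml, neg_smul, neg_smul, one_smul, sub_neg_eq_add]
      abel
    rw [hq] at h2
    unfold IsIdempotentElem at h1 h2
    rw [ratSmulMulAux, mulRatSmulAux, smul_smul, h1] at h2
    set c : ℚ := (-l⁻¹) * (-l⁻¹) - (-l⁻¹) with hcdef
    have h3 : c • p = 0 := by
      rw [hcdef, sub_smul, h2, sub_self]
    have hl1' : 1 + l ≠ 0 := by
      intro h
      exact hl1 (by linarith)
    have hc : c ≠ 0 := by
      have hcval : c * l ^ 2 = 1 + l := by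
        have h1l : l⁻¹ * l = 1 := inv_mul_cancel₀ hl0
        have hrw : c * l ^ 2 = (l⁻¹ * l) * (l⁻¹ * l) + (l⁻¹ * l) * l := by
          rw [hcdef]; ring
        rw [hrw, h1l]
        ring
      intro h
      rw [h, zero_mul] at hcval
      exact hl1' hcval.symm
    have hp0 : p = 0 := by
      have h4 := congrArg (fun z => c⁻¹ • z) h3
      simpa [smul_smul, inv_mul_cancel₀ hc] using h4
    exact sub_eq_zero.mp hp0
  have hom : ∀ (l : ℚ) (r : R), φ (l • r) = l • φ r := by
    intro l r
    by_cases hl0 : l = 0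
    · subst hl0; simp [h0]
    by_cases hl1 : l = -1
    · subst hl1
      have e1 : (-1 : ℚ) • r = (-2 : ℚ) • ((1/2 : ℚ) • r) := by
        rw [smul_smul]; norm_num
      rw [e1, key (-2) (by norm_num) (by norm_num), key (1/2) (by norm_num) (by norm_num),
        smul_smul]
      norm_num
    · exact key l hl0 hl1 r
  refine ⟨hom, h0, fun r => ?_⟩
  have h5 := hom (-1) r
  rw [neg_one_smul] at h5
  rw [h5, neg_one_smul]
end

section
/- Let R be a 2,3-torsion free alternative ring with nontrivial idempotent e1 and Peirce decomposition satisfying: (1) x_ij R_ji = 0 implies x_ij = 0 for i ≠ j; (2) x11 R12 = 0 or R21 x11 = 0 implies x11 = 0; (3) R12 x22 = 0 or x22 R21 = 0 implies x22 = 0. Then if [a11 + a22, R12] = 0 then a11 + a22 lies in the commutative centre Z(R), and similarly if [a11 + a22, R21] = 0 then a11 + a22 ∈ Z(R). -/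
/-- The commutative centre `{z | ∀ x, z x = x z}`. -/
def commCentre (R : Type*) [NonAssocRing R] : Set R :=
  {z | ∀ x : R, z * x = x * z}

/-- Under the nondegeneracy conditions (1)-(3), if `a₁₁ + a₂₂` commutes with
`R₁₂` (or with `R₂₁`) then it lies in the commutative centre. -/
theorem comm_with_offdiag_central (R : Type*) [NonAssocRing R]
    (alt_left : ∀ x y : R, (x * x) * y = x * (x * y))
    (alt_right : ∀ x y : R, (y * x) * x = y * (x * x))
    (tf2 : ∀ x : R, (2 : ℕ) • x = 0 → x = 0)
    (tf3 : ∀ x : R, (3 : ℕ) • x = 0 → x = 0)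
    (e1 : R) (he : e1 * e1 = e1) (he0 : e1 ≠ 0) (he1 : e1 ≠ 1)
    (e : Fin 2 → R) (h1 : e 0 = e1) (h2 : e 1 = 1 - e1)
    (cond1 : ∀ (i j : Fin 2), i ≠ j → ∀ x ∈ peirceSet (e i) (e j),
      (∀ r ∈ peirceSet (e j) (e i), x * r = 0) → x = 0)
    (cond2 : ∀ x ∈ peirceSet (e 0) (e 0),
      ((∀ r ∈ peirceSet (e 0) (e 1), x * r = 0) ∨
       (∀ r ∈ peirceSet (e 1) (e 0), r * x = 0)) → x = 0)
    (cond3 : ∀ x ∈ peirceSet (e 1) (e 1),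
      ((∀ r ∈ peirceSet (e 0) (e 1), r * x = 0) ∨
       (∀ r ∈ peirceSet (e 1) (e 0), x * r = 0)) → x = 0) :
    (∀ a ∈ peirceSet (e 0) (e 0), ∀ b ∈ peirceSet (e 1) (e 1),
      (∀ x ∈ peirceSet (e 0) (e 1), (a + b) * x = x * (a + b)) →
        a + b ∈ commCentre R) ∧
    (∀ a ∈ peirceSet (e 0) (e 0), ∀ b ∈ peirceSet (e 1) (e 1),
      (∀ x ∈ peirceSet (e 1) (e 0), (a + b) * x = x * (a + b)) →
        a + b ∈ commCentre R) := by
  -- linearized alternative laws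
  have linL : ∀ x y z : R, x * y * z + y * x * z = x * (y * z) + y * (x * z) := by
    intro x y z
    have h := alt_left (x + y) z
    have hh1 := alt_left x z
    have hh2 := alt_left y z
    simp only [add_mul, mul_add] at h
    linear_combination (norm := abel1) h - hh1 - hh2
  have linR : ∀ x y z : R, x * y * z + x * z * y = x * (y * z) + x * (z * y) := by
    intro x y z
    have h := alt_right (y + z) x
    have hh1 := alt_right y x
    have hh2 := alt_right z x
    simp only [add_mul, mul_add] at h
    linear_combination (norm := abel1) h - hh1 - hh2
  have ML : ∀ x y : R, e1 * (x * y) = e1 * x * y + x * e1 * y - x * (e1 * y) :=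
    fun x y => by linear_combination (norm := abel1) -(linL e1 x y)
  have MR : ∀ x y : R, (x * y) * e1 = x * (y * e1) - x * e1 * y + x * (e1 * y) :=
    fun x y => by linear_combination (norm := abel1) (linR x y e1)
  have twotor : ∀ v : R, v + v = 0 → v = 0 := fun v h =>
    tf2 v (by rw [two_nsmul]; exact h)
  have eigenL2 : ∀ v : R, e1 * v = v + v → v = 0 := by
    intro v h
    have h2 : e1 * (e1 * v) = e1 * v := by rw [← alt_left, he]
    rw [h, mul_add, h] at h2
    have h3 : v + v + (v + v) = 0 + (v + v) := by rw [zero_add]; exact h2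
    exact twotor _ (add_right_cancel h3)
  have eigenLneg : ∀ v : R, e1 * v = -v → v = 0 := by
    intro v h
    have h2 : e1 * (e1 * v) = e1 * v := by rw [← alt_left, he]
    rw [h, mul_neg, h, neg_neg] at h2
    exact twotor v (eq_neg_iff_add_eq_zero.mp h2)
  have eigenR2 : ∀ v : R, v * e1 = v + v → v = 0 := by
    intro v h
    have h2 : v * e1 * e1 = v * e1 := by rw [alt_right, he]
    rw [h, add_mul, h] at h2
    have h3 : v + v + (v + v) = 0 + (v + v) := by rw [zero_add]; exact h2
    exact twotor _ (add_right_cancel h3)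
  have eigenRneg : ∀ v : R, v * e1 = -v → v = 0 := by
    intro v h
    have h2 : v * e1 * e1 = v * e1 := by rw [alt_right, he]
    rw [h, neg_mul, h, neg_neg] at h2
    exact twotor v (eq_neg_iff_add_eq_zero.mp h2)
  -- Peirce zero-product rules
  have zeroL1 : ∀ x y : R, e1 * x = x → x * e1 = x → e1 * y = 0 → x * y = 0 := by
    intro x y hx1 hx2 hy
    have h := ML x y
    rw [hx1, hx2, hy, mul_zero, sub_zero] at h
    exact eigenL2 _ h
  have zeroL2 : ∀ x y : R, e1 * x = 0 → x * e1 = 0 → e1 * y = y → x * y = 0 := by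
    intro x y hx1 hx2 hy
    have h := ML x y
    rw [hx1, hx2, hy, zero_mul, zero_add, zero_sub] at h
    exact eigenLneg _ h
  have zeroR1 : ∀ x y : R, x * e1 = 0 → e1 * y = y → y * e1 = y → x * y = 0 := by
    intro x y hx2 hy1 hy2
    have h := MR x y
    rw [hx2, zero_mul, hy1, hy2, sub_zero] at h
    exact eigenR2 _ h
  have zeroR2 : ∀ x y : R, x * e1 = x → e1 * y = 0 → y * e1 = 0 → x * y = 0 := by
    intro x y hx2 hy1 hy2
    have h := MR x y
    rw [hx2, hy1, hy2, mul_zero, add_zero, zero_sub] at h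
    exact eigenRneg _ h
  -- closure (action) rules for products
  have act11 : ∀ x y : R, e1 * x = x → x * e1 = x → e1 * y = y → y * e1 = y →
      e1 * (x * y) = x * y ∧ (x * y) * e1 = x * y := by
    intro x y hx1 hx2 hy1 hy2
    constructor
    · rw [ML]; simp only [hx1, hx2, hy1, hy2, zero_mul, mul_zero]; abel
    · rw [MR]; simp only [hx1, hx2, hy1, hy2, zero_mul, mul_zero]; abel
  have act1112 : ∀ x y : R, e1 * x = x → x * e1 = x → e1 * y = y → y * e1 = 0 →
      e1 * (x * y) = x * y ∧ (x * y) * e1 = 0 := by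
    intro x y hx1 hx2 hy1 hy2
    constructor
    · rw [ML]; simp only [hx1, hx2, hy1, hy2, zero_mul, mul_zero]; abel
    · rw [MR]; simp only [hx1, hx2, hy1, hy2, zero_mul, mul_zero]; abel
  have act1222 : ∀ x y : R, e1 * x = x → x * e1 = 0 → e1 * y = 0 → y * e1 = 0 →
      e1 * (x * y) = x * y ∧ (x * y) * e1 = 0 := by
    intro x y hx1 hx2 hy1 hy2
    constructor
    · rw [ML]; simp only [hx1, hx2, hy1, hy2, zero_mul, mul_zero]; abel
    · rw [MR]; simp only [hx1, hx2, hy1, hy2, zero_mul, mul_zero]; abel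
  have act1221 : ∀ x y : R, e1 * x = x → x * e1 = 0 → e1 * y = 0 → y * e1 = y →
      e1 * (x * y) = x * y ∧ (x * y) * e1 = x * y := by
    intro x y hx1 hx2 hy1 hy2
    constructor
    · rw [ML]; simp only [hx1, hx2, hy1, hy2, zero_mul, mul_zero]; abel
    · rw [MR]; simp only [hx1, hx2, hy1, hy2, zero_mul, mul_zero]; abel
  have act2112 : ∀ x y : R, e1 * x = 0 → x * e1 = x → e1 * y = y → y * e1 = 0 →
      e1 * (x * y) = 0 ∧ (x * y) * e1 = 0 := by
    intro x y hx1 hx2 hy1 hy2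
    constructor
    · rw [ML]; simp only [hx1, hx2, hy1, hy2, zero_mul, mul_zero]; abel
    · rw [MR]; simp only [hx1, hx2, hy1, hy2, zero_mul, mul_zero]; abel
  have act2111 : ∀ x y : R, e1 * x = 0 → x * e1 = x → e1 * y = y → y * e1 = y →
      e1 * (x * y) = 0 ∧ (x * y) * e1 = x * y := by
    intro x y hx1 hx2 hy1 hy2
    constructor
    · rw [ML]; simp only [hx1, hx2, hy1, hy2, zero_mul, mul_zero]; abel
    · rw [MR]; simp only [hx1, hx2, hy1, hy2, zero_mul, mul_zero]; abel
  have act2221 : ∀ x y : R, e1 * x = 0 → x * e1 = 0 → e1 * y = 0 → y * e1 = y →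
      e1 * (x * y) = 0 ∧ (x * y) * e1 = x * y := by
    intro x y hx1 hx2 hy1 hy2
    constructor
    · rw [ML]; simp only [hx1, hx2, hy1, hy2, zero_mul, mul_zero]; abel
    · rw [MR]; simp only [hx1, hx2, hy1, hy2, zero_mul, mul_zero]; abel
  have act2222 : ∀ x y : R, e1 * x = 0 → x * e1 = 0 → e1 * y = 0 → y * e1 = 0 →
      e1 * (x * y) = 0 ∧ (x * y) * e1 = 0 := by
    intro x y hx1 hx2 hy1 hy2
    constructor
    · rw [ML]; simp only [hx1, hx2, hy1, hy2, zero_mul, mul_zero]; abel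
    · rw [MR]; simp only [hx1, hx2, hy1, hy2, zero_mul, mul_zero]; abel
  -- membership translations
  have mem00 : ∀ v : R, v ∈ peirceSet (e 0) (e 0) ↔ (e1 * v = v ∧ v * e1 = v) := by
    intro v; rw [h1]; exact Iff.rfl
  have mem01 : ∀ v : R, v ∈ peirceSet (e 0) (e 1) ↔ (e1 * v = v ∧ v * e1 = 0) := by
    intro v; rw [h1, h2]
    constructor
    · rintro ⟨u1, u2⟩
      rw [mul_one_sub] at u2
      exact ⟨u1, sub_eq_self.mp u2⟩
    · rintro ⟨u1, u2⟩
      exact ⟨u1, by rw [mul_one_sub, u2, sub_zero]⟩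
  have mem10 : ∀ v : R, v ∈ peirceSet (e 1) (e 0) ↔ (e1 * v = 0 ∧ v * e1 = v) := by
    intro v; rw [h1, h2]
    constructor
    · rintro ⟨u1, u2⟩
      rw [one_sub_mul] at u1
      exact ⟨sub_eq_self.mp u1, u2⟩
    · rintro ⟨u1, u2⟩
      exact ⟨by rw [one_sub_mul, u1, sub_zero], u2⟩
  have mem11 : ∀ v : R, v ∈ peirceSet (e 1) (e 1) ↔ (e1 * v = 0 ∧ v * e1 = 0) := by
    intro v; rw [h2]
    constructor
    · rintro ⟨u1, u2⟩
      rw [one_sub_mul] at u1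
      rw [mul_one_sub] at u2
      exact ⟨sub_eq_self.mp u1, sub_eq_self.mp u2⟩
    · rintro ⟨u1, u2⟩
      exact ⟨by rw [one_sub_mul, u1, sub_zero], by rw [mul_one_sub, u2, sub_zero]⟩
  -- Peirce decomposition of commutation
  have decomp : ∀ z : R,
      (∀ v, e1 * v = v → v * e1 = v → z * v = v * z) →
      (∀ v, e1 * v = v → v * e1 = 0 → z * v = v * z) →
      (∀ v, e1 * v = 0 → v * e1 = v → z * v = v * z) →
      (∀ v, e1 * v = 0 → v * e1 = 0 → z * v = v * z) →
      ∀ r : R, z * r = r * z := by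
    intro z c11 c12 c21 c22 r
    have hp1 : e1 * (e1 * r) = e1 * r := by rw [← alt_left, he]
    have hs1 : e1 * (e1 * (r * e1)) = e1 * (r * e1) := by rw [← alt_left, he]
    have hq2 : r * e1 * e1 = r * e1 := by rw [alt_right, he]
    have hflex : e1 * r * e1 = e1 * (r * e1) := by
      have h := linR e1 r e1
      rw [he, hp1] at h
      exact add_right_cancel h
    have hs2 : e1 * (r * e1) * e1 = e1 * (r * e1) := by
      rw [← hflex, alt_right, he]
    have h11 := c11 (e1 * (r * e1)) hs1 hs2
    have h12 := c12 (e1 * r - e1 * (r * e1))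
      (by rw [mul_sub, hp1, hs1])
      (by rw [sub_mul, hflex, hs2, sub_self])
    have h21 := c21 (r * e1 - e1 * (r * e1))
      (by rw [mul_sub, hs1, sub_self])
      (by rw [sub_mul, hq2, hs2])
    have h22 := c22 (r - e1 * r - r * e1 + e1 * (r * e1))
      (by rw [mul_add, mul_sub, mul_sub, hp1, hs1]; abel)
      (by rw [add_mul, sub_mul, sub_mul, hq2, hflex, hs2]; abel)
    have hsum : e1 * (r * e1) + ((e1 * r - e1 * (r * e1)) +
        ((r * e1 - e1 * (r * e1)) + (r - e1 * r - r * e1 + e1 * (r * e1)))) = r := by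
      abel
    have hL : z * r = z * (e1 * (r * e1)) + (z * (e1 * r - e1 * (r * e1)) +
        (z * (r * e1 - e1 * (r * e1)) + z * (r - e1 * r - r * e1 + e1 * (r * e1)))) := by
      rw [← mul_add, ← mul_add, ← mul_add, hsum]
    have hR : r * z = (e1 * (r * e1)) * z + ((e1 * r - e1 * (r * e1)) * z +
        ((r * e1 - e1 * (r * e1)) * z + (r - e1 * r - r * e1 + e1 * (r * e1)) * z)) := by
      rw [← add_mul, ← add_mul, ← add_mul, hsum]
    rw [hL, hR, h11, h12, h21, h22]
  -- common finish
  have finish : ∀ a b : R, e1 * a = a → a * e1 = a → e1 * b = 0 → b * e1 = 0 →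
      (∀ v, e1 * v = v → v * e1 = v → a * v = v * a) →
      (∀ v, e1 * v = 0 → v * e1 = 0 → b * v = v * b) →
      (∀ v, e1 * v = v → v * e1 = 0 → a * v = v * b) →
      (∀ v, e1 * v = 0 → v * e1 = v → b * v = v * a) →
      a + b ∈ commCentre R := by
    intro a b ha1 ha2 hb1 hb2 cA cB c12 c21
    simp only [commCentre, Set.mem_setOf_eq]
    refine decomp (a + b) ?_ ?_ ?_ ?_
    · intro v hv1 hv2
      rw [add_mul, mul_add, zeroL2 b v hb1 hb2 hv1, zeroL1 v b hv1 hv2 hb1,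
        cA v hv1 hv2]
    · intro v hv1 hv2
      rw [add_mul, mul_add, zeroL2 b v hb1 hb2 hv1, zeroR1 v a hv2 ha1 ha2,
        c12 v hv1 hv2]
      abel
    · intro v hv1 hv2
      rw [add_mul, mul_add, zeroL1 a v ha1 ha2 hv1, c21 v hv1 hv2,
        zeroR2 v b hv2 hb1 hb2]
      abel
    · intro v hv1 hv2
      rw [add_mul, mul_add, zeroL1 a v ha1 ha2 hv1, zeroL2 v a hv1 hv2 ha1,
        cB v hv1 hv2]
  constructor
  -- PART 1 : commuting with R12
  · intro a ha b hb hK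
    obtain ⟨ha1, ha2⟩ := (mem00 a).mp ha
    obtain ⟨hb1, hb2⟩ := (mem11 b).mp hb
    have Kab : ∀ x, e1 * x = x → x * e1 = 0 → a * x = x * b := by
      intro x hx1 hx2
      have h := hK x ((mem01 x).mpr ⟨hx1, hx2⟩)
      rw [add_mul, mul_add, zeroL2 b x hb1 hb2 hx1, add_zero,
        zeroR1 x a hx2 ha1 ha2, zero_add] at h
      exact h
    -- a commutes with R11
    have commA : ∀ r, e1 * r = r → r * e1 = r → a * r = r * a := by
      intro r hr1 hr2
      have key : ∀ x, e1 * x = x → x * e1 = 0 → (a * r - r * a) * x = 0 := by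
        intro x hx1 hx2
        have hax := act1112 a x ha1 ha2 hx1 hx2
        have hrx := act1112 r x hr1 hr2 hx1 hx2
        have i1 : a * r * x = a * (r * x) := by
          have h := linR a r x
          rw [zeroR1 x r hx2 hr1 hr2, mul_zero, add_zero,
            zeroR1 (a * x) r hax.2 hr1 hr2, add_zero] at h
          exact h
        have i2 : r * a * x = r * (a * x) := by
          have h := linR r a x
          rw [zeroR1 x a hx2 ha1 ha2, mul_zero, add_zero,
            zeroR1 (r * x) a hrx.2 ha1 ha2, add_zero] at h
          exact h
        have i3 : r * x * b = r * (x * b) := by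
          have h := linR r x b
          rw [zeroL2 b x hb1 hb2 hx1, mul_zero, add_zero,
            zeroL1 r b hr1 hr2 hb1, zero_mul, add_zero] at h
          exact h
        rw [sub_mul, i1, i2, Kab (r * x) hrx.1 hrx.2, Kab x hx1 hx2, i3, sub_self]
      have hmem : a * r - r * a ∈ peirceSet (e 0) (e 0) := (mem00 _).mpr
        ⟨by rw [mul_sub, (act11 a r ha1 ha2 hr1 hr2).1, (act11 r a hr1 hr2 ha1 ha2).1],
         by rw [sub_mul, (act11 a r ha1 ha2 hr1 hr2).2, (act11 r a hr1 hr2 ha1 ha2).2]⟩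
      have h0 := cond2 _ hmem (Or.inl fun ρ hρ =>
        key ρ ((mem01 ρ).mp hρ).1 ((mem01 ρ).mp hρ).2)
      exact sub_eq_zero.mp h0
    -- b commutes with R22
    have commB : ∀ s, e1 * s = 0 → s * e1 = 0 → b * s = s * b := by
      intro s hs1 hs2
      have key : ∀ x, e1 * x = x → x * e1 = 0 → x * (b * s - s * b) = 0 := by
        intro x hx1 hx2
        have hxs := act1222 x s hx1 hx2 hs1 hs2
        have hxb := act1222 x b hx1 hx2 hb1 hb2
        have j1 : x * b * s = x * (b * s) := by
          have h := linL x b s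
          rw [zeroL2 b x hb1 hb2 hx1, zero_mul, add_zero,
            zeroL2 b (x * s) hb1 hb2 hxs.1, add_zero] at h
          exact h
        have j2 : a * x * s = a * (x * s) := by
          have h := linR a x s
          rw [zeroL2 s x hs1 hs2 hx1, mul_zero, add_zero,
            zeroL1 a s ha1 ha2 hs1, zero_mul, add_zero] at h
          exact h
        have j3 : x * s * b = x * (s * b) := by
          have h := linL x s b
          rw [zeroL2 s x hs1 hs2 hx1, zero_mul, add_zero,
            zeroL2 s (x * b) hs1 hs2 hxb.1, add_zero] at h
          exact h
        rw [mul_sub, ← j1, ← Kab x hx1 hx2, j2, Kab (x * s) hxs.1 hxs.2, j3, sub_self]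
      have hmem : b * s - s * b ∈ peirceSet (e 1) (e 1) := (mem11 _).mpr
        ⟨by rw [mul_sub, (act2222 b s hb1 hb2 hs1 hs2).1,
            (act2222 s b hs1 hs2 hb1 hb2).1, sub_self],
         by rw [sub_mul, (act2222 b s hb1 hb2 hs1 hs2).2,
            (act2222 s b hs1 hs2 hb1 hb2).2, sub_self]⟩
      have h0 := cond3 _ hmem (Or.inl fun ρ hρ =>
        key ρ ((mem01 ρ).mp hρ).1 ((mem01 ρ).mp hρ).2)
      exact sub_eq_zero.mp h0
    -- a + b commutes with R21
    have K21 : ∀ u, e1 * u = 0 → u * e1 = u → b * u = u * a := by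
      intro u hu1 hu2
      have key : ∀ x, e1 * x = x → x * e1 = 0 → (b * u - u * a) * x = 0 := by
        intro x hx1 hx2
        have hux := act2112 u x hu1 hu2 hx1 hx2
        have k1 : b * u * x = b * (u * x) := by
          have h := linL b u x
          rw [zeroR2 u b hu2 hb1 hb2, zero_mul, add_zero,
            zeroL2 b x hb1 hb2 hx1, mul_zero, add_zero] at h
          exact h
        have k2 : u * a * x = u * (a * x) := by
          have h := linL u a x
          rw [zeroL1 a u ha1 ha2 hu1, zero_mul, add_zero,
            zeroL1 a (u * x) ha1 ha2 hux.1, add_zero] at h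
          exact h
        have k3 : u * x * b = u * (x * b) := by
          have h := linR u x b
          rw [zeroR2 u b hu2 hb1 hb2, zero_mul, add_zero,
            zeroL2 b x hb1 hb2 hx1, mul_zero, add_zero] at h
          exact h
        rw [sub_mul, k1, k2, Kab x hx1 hx2, ← k3, ← commB (u * x) hux.1 hux.2,
          sub_self]
      have hmem : b * u - u * a ∈ peirceSet (e 1) (e 0) := (mem10 _).mpr
        ⟨by rw [mul_sub, (act2221 b u hb1 hb2 hu1 hu2).1,
            (act2111 u a hu1 hu2 ha1 ha2).1, sub_self],
         by rw [sub_mul, (act2221 b u hb1 hb2 hu1 hu2).2,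
            (act2111 u a hu1 hu2 ha1 ha2).2]⟩
      have h0 := cond1 1 0 (by decide) _ hmem (fun ρ hρ =>
        key ρ ((mem01 ρ).mp hρ).1 ((mem01 ρ).mp hρ).2)
      exact sub_eq_zero.mp h0
    exact finish a b ha1 ha2 hb1 hb2 commA commB Kab K21
  -- PART 2 : commuting with R21
  · intro a ha b hb hK
    obtain ⟨ha1, ha2⟩ := (mem00 a).mp ha
    obtain ⟨hb1, hb2⟩ := (mem11 b).mp hb
    have Kba : ∀ u, e1 * u = 0 → u * e1 = u → b * u = u * a := by
      intro u hu1 hu2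
      have h := hK u ((mem10 u).mpr ⟨hu1, hu2⟩)
      rw [add_mul, mul_add, zeroL1 a u ha1 ha2 hu1, zero_add,
        zeroR2 u b hu2 hb1 hb2, add_zero] at h
      exact h
    -- a commutes with R11
    have commA : ∀ r, e1 * r = r → r * e1 = r → a * r = r * a := by
      intro r hr1 hr2
      have key : ∀ u, e1 * u = 0 → u * e1 = u → u * (a * r - r * a) = 0 := by
        intro u hu1 hu2
        have hur := act2111 u r hu1 hu2 hr1 hr2
        have hua := act2111 u a hu1 hu2 ha1 ha2
        have m1 : u * a * r = u * (a * r) := by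
          have h := linL u a r
          rw [zeroL1 a u ha1 ha2 hu1, zero_mul, add_zero,
            zeroL1 a (u * r) ha1 ha2 hur.1, add_zero] at h
          exact h
        have m2 : b * u * r = b * (u * r) := by
          have h := linL b u r
          rw [zeroR2 u b hu2 hb1 hb2, zero_mul, add_zero,
            zeroL2 b r hb1 hb2 hr1, mul_zero, add_zero] at h
          exact h
        have m3 : u * r * a = u * (r * a) := by
          have h := linL u r a
          rw [zeroL1 r u hr1 hr2 hu1, zero_mul, add_zero,
            zeroL1 r (u * a) hr1 hr2 hua.1, add_zero] at h
          exact h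
        rw [mul_sub, ← m1, ← Kba u hu1 hu2, m2, Kba (u * r) hur.1 hur.2, m3,
          sub_self]
      have hmem : a * r - r * a ∈ peirceSet (e 0) (e 0) := (mem00 _).mpr
        ⟨by rw [mul_sub, (act11 a r ha1 ha2 hr1 hr2).1, (act11 r a hr1 hr2 ha1 ha2).1],
         by rw [sub_mul, (act11 a r ha1 ha2 hr1 hr2).2, (act11 r a hr1 hr2 ha1 ha2).2]⟩
      have h0 := cond2 _ hmem (Or.inr fun ρ hρ =>
        key ρ ((mem10 ρ).mp hρ).1 ((mem10 ρ).mp hρ).2)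
      exact sub_eq_zero.mp h0
    -- b commutes with R22
    have commB : ∀ s, e1 * s = 0 → s * e1 = 0 → b * s = s * b := by
      intro s hs1 hs2
      have key : ∀ u, e1 * u = 0 → u * e1 = u → (b * s - s * b) * u = 0 := by
        intro u hu1 hu2
        have hsu := act2221 s u hs1 hs2 hu1 hu2
        have hbu := act2221 b u hb1 hb2 hu1 hu2
        have n1 : b * s * u = b * (s * u) := by
          have h := linR b s u
          rw [zeroR2 (b * u) s hbu.2 hs1 hs2, add_zero,
            zeroR2 u s hu2 hs1 hs2, mul_zero, add_zero] at h
          exact h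
        have n2 : s * u * a = s * (u * a) := by
          have h := linL s u a
          rw [zeroR2 u s hu2 hs1 hs2, zero_mul, add_zero,
            zeroL2 s a hs1 hs2 ha1, mul_zero, add_zero] at h
          exact h
        have n3 : s * b * u = s * (b * u) := by
          have h := linR s b u
          rw [zeroR2 (s * u) b hsu.2 hb1 hb2, add_zero,
            zeroR2 u b hu2 hb1 hb2, mul_zero, add_zero] at h
          exact h
        rw [sub_mul, n1, Kba (s * u) hsu.1 hsu.2, n2, ← Kba u hu1 hu2, ← n3,
          sub_self]
      have hmem : b * s - s * b ∈ peirceSet (e 1) (e 1) := (mem11 _).mpr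
        ⟨by rw [mul_sub, (act2222 b s hb1 hb2 hs1 hs2).1,
            (act2222 s b hs1 hs2 hb1 hb2).1, sub_self],
         by rw [sub_mul, (act2222 b s hb1 hb2 hs1 hs2).2,
            (act2222 s b hs1 hs2 hb1 hb2).2, sub_self]⟩
      have h0 := cond3 _ hmem (Or.inr fun ρ hρ =>
        key ρ ((mem10 ρ).mp hρ).1 ((mem10 ρ).mp hρ).2)
      exact sub_eq_zero.mp h0
    -- a + b commutes with R12
    have K12 : ∀ x, e1 * x = x → x * e1 = 0 → a * x = x * b := by
      intro x hx1 hx2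
      have key : ∀ u, e1 * u = 0 → u * e1 = u → (a * x - x * b) * u = 0 := by
        intro u hu1 hu2
        have hxu := act1221 x u hx1 hx2 hu1 hu2
        have hux := act2112 u x hu1 hu2 hx1 hx2
        have p1 : a * x * u = a * (x * u) := by
          have h := linR a x u
          rw [zeroL1 a u ha1 ha2 hu1, zero_mul, add_zero,
            zeroL1 a (u * x) ha1 ha2 hux.1, add_zero] at h
          exact h
        have p2 : x * u * a = x * (u * a) := by
          have h := linR x u a
          rw [zeroR1 x a hx2 ha1 ha2, zero_mul, add_zero,
            zeroL1 a u ha1 ha2 hu1, mul_zero, add_zero] at h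
          exact h
        have p3 : x * b * u = x * (b * u) := by
          have h := linR x b u
          rw [zeroL1 (x * u) b hxu.1 hxu.2 hb1, add_zero,
            zeroR2 u b hu2 hb1 hb2, mul_zero, add_zero] at h
          exact h
        rw [sub_mul, p1, commA (x * u) hxu.1 hxu.2, p2, ← Kba u hu1 hu2, ← p3,
          sub_self]
      have hmem : a * x - x * b ∈ peirceSet (e 0) (e 1) := (mem01 _).mpr
        ⟨by rw [mul_sub, (act1112 a x ha1 ha2 hx1 hx2).1, (act1222 x b hx1 hx2 hb1 hb2).1],
         by rw [sub_mul, (act1112 a x ha1 ha2 hx1 hx2).2, (act1222 x b hx1 hx2 hb1 hb2).2,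
            sub_self]⟩
      have h0 := cond1 0 1 (by decide) _ hmem (fun ρ hρ =>
        key ρ ((mem10 ρ).mp hρ).1 ((mem10 ρ).mp hρ).2)
      exact sub_eq_zero.mp h0
    exact finish a b ha1 ha2 hb1 hb2 commA commB K12 Kba
end

section
/- Let R, R' be alternative rings, e1 a nontrivial idempotent of R with Peirce decompositions on both rings (via f1 = φ(e1)), and φ: R → R' a bijective Lie multiplicative map preserving idempotents with φ(e1) = f1 a nontrivial idempotent. Then φ(R12) = R'12 and φ(R21) = R'21. -/
private lemma tfree {M : Type*} [AddCommGroup M] [Module ℚ M] {x : M}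
    (h : x + x = 0) : x = 0 := by
  have h2 : (2 : ℚ) • x = 0 := by rw [two_smul]; exact h
  calc x = ((1/2 : ℚ) * 2) • x := by norm_num
    _ = (1/2 : ℚ) • ((2:ℚ) • x) := by rw [mul_smul]
    _ = 0 := by rw [h2, smul_zero]

private lemma flex {R : Type*} [NonAssocRing R]
    (hl : ∀ x y : R, (x * x) * y = x * (x * y))
    (hr : ∀ x y : R, (y * x) * x = y * (x * x))
    (a b : R) : (a * b) * a = a * (b * a) := by
  have h := hl (a + b) a
  simp only [add_mul, mul_add] at h
  rw [hl a a, hl b a, hr a b] at h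
  exact add_right_cancel (add_left_cancel h)

/-- `[e,x] = x` characterizes the `12` Peirce component. -/
private lemma char12 {R : Type*} [NonAssocRing R] [Module ℚ R]
    (hl : ∀ x y : R, (x * x) * y = x * (x * y))
    (hr : ∀ x y : R, (y * x) * x = y * (x * x))
    {e : R} (he : e * e = e) (x : R) :
    x ∈ peirceSet e (1 - e) ↔ e * x - x * e = x := by
  constructor
  · rintro ⟨h1, h2⟩
    have hxe : x * e = 0 := by
      rw [mul_sub, mul_one, sub_eq_self] at h2
      exact h2
    rw [h1, hxe, sub_zero]
  · intro h
    have hee : e * (e * x) = e * x := by rw [← hl e x, he]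
    have hxee : (x * e) * e = x * e := by rw [hr e x, he]
    -- left-multiply by e :  e*(x*e) = 0
    have hL : e * (x * e) = 0 := by
      have h' := congrArg (fun z => e * z) h
      simp only [mul_sub] at h'
      rw [hee] at h'
      exact sub_eq_self.mp h'
    -- right-multiply by e : (e*x)*e = x*e + x*e
    have hR : (e * x) * e = x * e + x * e := by
      have h' := congrArg (fun z => z * e) h
      simp only [sub_mul] at h'
      rw [hxee] at h'
      exact sub_eq_iff_eq_add.mp h'
    have hze : x * e = 0 := by
      refine tfree ?_
      rw [← hR, flex hl hr e x, hL]
    have hex : e * x = x := by rw [hze, sub_zero] at h; exact h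
    exact ⟨hex, by rw [mul_sub, mul_one, hze, sub_zero]⟩

/-- `[e,x] = -x` characterizes the `21` Peirce component. -/
private lemma char21 {R : Type*} [NonAssocRing R] [Module ℚ R]
    (hl : ∀ x y : R, (x * x) * y = x * (x * y))
    (hr : ∀ x y : R, (y * x) * x = y * (x * x))
    {e : R} (he : e * e = e) (x : R) :
    x ∈ peirceSet (1 - e) e ↔ e * x - x * e = -x := by
  constructor
  · rintro ⟨h1, h2⟩
    have hex : e * x = 0 := by
      rw [sub_mul, one_mul, sub_eq_self] at h1
      exact h1
    rw [h2, hex, zero_sub]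
  · intro h
    have h' : x * e - e * x = x := by
      have := congrArg Neg.neg h
      rw [neg_sub, neg_neg] at this
      exact this
    have hee : e * (e * x) = e * x := by rw [← hl e x, he]
    have hxee : (x * e) * e = x * e := by rw [hr e x, he]
    -- right-multiply by e : (e*x)*e = 0
    have hRz : (e * x) * e = 0 := by
      have h2 := congrArg (fun z => z * e) h'
      simp only [sub_mul] at h2
      rw [hxee] at h2
      exact sub_eq_self.mp h2
    -- left-multiply by e : e*(x*e) = e*x + e*x
    have hL : e * (x * e) = e * x + e * x := by
      have h2 := congrArg (fun z => e * z) h'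
      simp only [mul_sub] at h2
      rw [hee] at h2
      exact sub_eq_iff_eq_add.mp h2
    have hze : e * x = 0 := by
      refine tfree ?_
      rw [← hL, ← flex hl hr e x, hRz]
    have hxe : x * e = x := by rw [hze, sub_zero] at h'; exact h'
    exact ⟨by rw [sub_mul, one_mul, hze, sub_zero], hxe⟩

/-- A bijective Lie multiplicative idempotent-preserving and ℚ-homogeneous map
maps `R₁₂` onto `R'₁₂` and `R₂₁` onto `R'₂₁`. -/
theorem lie_map_offdiag (R R' : Type*) [NonAssocRing R] [NonAssocRing R']
    [Module ℚ R] [Module ℚ R']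
    (altR_left : ∀ x y : R, (x * x) * y = x * (x * y))
    (altR_right : ∀ x y : R, (y * x) * x = y * (x * x))
    (altR'_left : ∀ x y : R', (x * x) * y = x * (x * y))
    (altR'_right : ∀ x y : R', (y * x) * x = y * (x * x))
    (e1 : R) (he : e1 * e1 = e1) (he0 : e1 ≠ 0) (he1 : e1 ≠ 1)
    (φ : R → R') (hbij : Function.Bijective φ)
    (hlie : ∀ x y : R, φ (x * y - y * x) = φ x * φ y - φ y * φ x)
    (hidem : ∀ (a b : R) (l : ℚ),
      IsIdempotentElem (a - l • b) ↔ IsIdempotentElem (φ a - l • φ b))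
    (hhom : ∀ (l : ℚ) (r : R), φ (l • r) = l • φ r)
    (f1 : R') (hf : f1 = φ e1) (hfidem : f1 * f1 = f1) (hf0 : f1 ≠ 0) (hf1 : f1 ≠ 1) :
    φ '' peirceSet e1 (1 - e1) = peirceSet f1 (1 - f1) ∧
    φ '' peirceSet (1 - e1) e1 = peirceSet (1 - f1) f1 := by
  have hneg : ∀ r : R, φ (-r) = -φ r := by
    intro r
    have := hhom (-1) r
    rwa [neg_one_smul, neg_one_smul] at this
  have hbr : ∀ x : R, φ (e1 * x - x * e1) = f1 * φ x - φ x * f1 := by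
    intro x
    rw [hf]
    exact hlie e1 x
  constructor
  · ext y
    constructor
    · rintro ⟨x, hx, rfl⟩
      have hx' : e1 * x - x * e1 = x := (char12 altR_left altR_right he x).mp hx
      refine (char12 altR'_left altR'_right hfidem (φ x)).mpr ?_
      rw [← hbr, hx']
    · intro hy
      obtain ⟨x, rfl⟩ := hbij.2 y
      have hy' : f1 * φ x - φ x * f1 = φ x :=
        (char12 altR'_left altR'_right hfidem (φ x)).mp hy
      have hx' : e1 * x - x * e1 = x := hbij.1 (by rw [hbr, hy'])
      exact ⟨x, (char12 altR_left altR_right he x).mpr hx', rfl⟩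
  · ext y
    constructor
    · rintro ⟨x, hx, rfl⟩
      have hx' : e1 * x - x * e1 = -x := (char21 altR_left altR_right he x).mp hx
      refine (char21 altR'_left altR'_right hfidem (φ x)).mpr ?_
      rw [← hbr, hx', hneg]
    · intro hy
      obtain ⟨x, rfl⟩ := hbij.2 y
      have hy' : f1 * φ x - φ x * f1 = -φ x :=
        (char21 altR'_left altR'_right hfidem (φ x)).mp hy
      have hx' : e1 * x - x * e1 = -x := hbij.1 (by rw [hbr, hy', hneg])
      exact ⟨x, (char21 altR_left altR_right he x).mpr hx', rfl⟩
end

section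
/- Let R be an alternative ring with idempotent e1 and Peirce decomposition, i ≠ j. For a ∈ Rij and b ∈ Rji, the double commutator satisfies [[a,b],a] = 2·(a·b)·a. -/
/-- For `a ∈ Rᵢⱼ`, `b ∈ Rⱼᵢ` (`i ≠ j`) in an alternative ring,
`[[a,b],a] = 2 (ab) a`. -/
theorem double_commutator (R : Type*) [NonAssocRing R]
    (alt_left : ∀ x y : R, (x * x) * y = x * (x * y))
    (alt_right : ∀ x y : R, (y * x) * x = y * (x * x))
    (e1 : R) (he : e1 * e1 = e1)
    (e : Fin 2 → R) (h1 : e 0 = e1) (h2 : e 1 = 1 - e1) :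
    ∀ (i j : Fin 2), i ≠ j → ∀ a ∈ peirceSet (e i) (e j), ∀ b ∈ peirceSet (e j) (e i),
      ((a * b - b * a) * a - a * (a * b - b * a)) = (2 : ℕ) • ((a * b) * a) := by
  -- flexibility
  have flex : ∀ x y : R, (x * y) * x = x * (y * x) := by
    intro x y
    have h := alt_left (x + y) x
    simp only [add_mul, mul_add] at h
    rw [alt_left x x, alt_right, alt_left y x] at h
    exact add_right_cancel (add_left_cancel h)
  intro i j hij a ha b hb
  obtain ⟨ha1, ha2⟩ := ha
  obtain ⟨hb1, hb2⟩ := hb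
  -- e i + e j = 1
  have hsum : e i + e j = 1 := by
    fin_cases i <;> fin_cases j <;> simp_all [h1, h2] <;> abel
  -- e j * a = 0
  have hja : e j * a = 0 := by
    have : e j = 1 - e i := by rw [← hsum]; abel
    rw [this, sub_mul, one_mul, ha1, sub_self]
  -- a * a = 0
  have haa : a * a = 0 := by
    calc a * a = (a * e j) * a := by rw [ha2]
    _ = a * (e j * a) := flex a (e j)
    _ = 0 := by rw [hja, mul_zero]
  have h3 : (b * a) * a = 0 := by rw [alt_right, haa, mul_zero]
  have h4 : a * (a * b) = 0 := by rw [← alt_left, haa, zero_mul]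
  have h5 : a * (b * a) = (a * b) * a := (flex a b).symm
  rw [sub_mul, mul_sub, h3, h4, h5, sub_zero, zero_sub, sub_neg_eq_add, two_smul]
end
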